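/- The number of monic irreducible degree-three polynomials over F_q with constant term -1 equals (q^2 + q + 1 - gcd(3, q-1))/3. -/

import Mathlib

open Polynomial Finset
set_option linter.unusedSectionVars false

section Aux

theorem card_distinct_triples' {α : Type*} [Fintype α] [DecidableEq α] (s : Finset α) :
    ((univ : Finset (α × α × α)).filter fun x =>
        (x.1 ≠ x.2.1 ∧ x.1 ≠ x.2.2 ∧ x.2.1 ≠ x.2.2) ∧ x.1 ∈ s ∧ x.2.1 ∈ s ∧ x.2.2 ∈ s).card
      = s.card * (s.card - 1) * (s.card - 2) := by
  rw [Finset.card_eq_sum_card_fiberwise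
    (f := fun x : α × α × α => (x.1, x.2.1)) (t := s.offDiag)
    (fun x hx => by
      simp only [Finset.mem_coe, mem_filter] at hx
      exact mem_offDiag.mpr ⟨hx.2.2.1, hx.2.2.2.1, hx.2.1.1⟩)]
  have hfib : ∀ p ∈ s.offDiag,
      (((univ : Finset (α × α × α)).filter fun x =>
        (x.1 ≠ x.2.1 ∧ x.1 ≠ x.2.2 ∧ x.2.1 ≠ x.2.2) ∧ x.1 ∈ s ∧ x.2.1 ∈ s ∧ x.2.2 ∈ s).filter
          fun x => (x.1, x.2.1) = p).card = s.card - 2 := by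
    rintro ⟨r, t⟩ hp
    rw [mem_offDiag] at hp
    obtain ⟨hr, ht, hrt⟩ := hp
    rw [show s.card - 2 = ((s.erase r).erase t).card by
      rw [card_erase_of_mem (mem_erase.mpr ⟨Ne.symm hrt, ht⟩), card_erase_of_mem hr]; omega]
    apply Finset.card_bij (fun x _ => x.2.2)
    · rintro ⟨a, b, c⟩ hx
      simp only [mem_filter, mem_univ, true_and, Prod.mk.injEq] at hx
      obtain ⟨⟨⟨h4, h5, h6⟩, h1, h2, h3⟩, h7, h8⟩ := hx
      subst h7; subst h8
      exact mem_erase.mpr ⟨Ne.symm h6, mem_erase.mpr ⟨Ne.symm h5, h3⟩⟩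
    · rintro ⟨a, b, c⟩ hx ⟨a', b', c'⟩ hy h
      simp only [mem_filter, Prod.mk.injEq] at hx hy
      cases hx.2.1; cases hx.2.2; cases hy.2.1; cases hy.2.2; cases h; rfl
    · intro c hc
      rw [mem_erase, mem_erase] at hc
      exact ⟨(r, t, c), mem_filter.mpr ⟨mem_filter.mpr ⟨mem_univ _,
        ⟨hrt, Ne.symm hc.2.1, Ne.symm hc.1⟩, hr, ht, hc.2.2⟩, rfl⟩, rfl⟩
  rw [Finset.sum_congr rfl hfib, Finset.sum_const, Finset.offDiag_card, smul_eq_mul]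
  have h : s.card * s.card - s.card = s.card * (s.card - 1) := by
    rw [Nat.mul_sub, mul_one]
  rw [h]

theorem sum_card_swap {α β : Type*} [Fintype α] [Fintype β] (p : α → β → Prop)
    [∀ a b, Decidable (p a b)] :
    ∑ a, ((univ : Finset β).filter (p a)).card
      = ∑ b, ((univ : Finset α).filter (fun a => p a b)).card := by
  simp_rw [Finset.card_filter]
  exact Finset.sum_comm

theorem nat_arith (n : ℕ) (h : n ≤ 3) :
    6 + 3 * (n * n - n) = 6 * (if n = 0 then 1 else 0) + 6 * n + n * (n - 1) * (n - 2) := by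
  interval_cases n <;> simp

variable {F : Type*} [Field F] [Fintype F] [DecidableEq F]

theorem card_cube_roots : (univ.filter fun x : F => x ^ 3 = 1).card
    = Nat.gcd 3 (Fintype.card F - 1) := by
  classical
  set m := Fintype.card F - 1 with hm
  set d := Nat.gcd 3 m with hd
  have hcard : Fintype.card Fˣ = m := by rw [hm]; exact Fintype.card_units F
  have hdm : d ∣ m := Nat.gcd_dvd_right 3 m
  have e1 : (univ.filter fun x : F => x ^ 3 = 1).card = Nat.card {u : Fˣ // u ^ 3 = 1} := by
    rw [← Fintype.card_subtype, ← Nat.card_eq_fintype_card]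
    apply Nat.card_congr
    exact { toFun := fun x => ⟨Units.mk0 x.1 (fun h => by simpa [h] using x.2), by
              ext; push_cast; exact x.2⟩
            invFun := fun u => ⟨(u.1 : F), by
              have h2 := u.2; rw [Units.ext_iff] at h2; push_cast at h2; exact h2⟩
            left_inv := fun x => by ext; simp
            right_inv := fun u => by ext; simp }
  rw [e1]
  obtain ⟨g, hg⟩ := IsCyclic.exists_ofOrder_eq_natCard (α := Fˣ)
  rw [Nat.card_eq_fintype_card, hcard] at hg
  have hm0 : m ≠ 0 := by
    have : 0 < Fintype.card Fˣ := Fintype.card_pos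
    omega
  have hd0 : d ≠ 0 := Nat.gcd_ne_zero_left (by norm_num)
  have horder : orderOf (g ^ (m / d)) = d := by
    rw [orderOf_pow, hg, Nat.gcd_eq_right (Nat.div_dvd_of_dvd hdm),
      Nat.div_div_self hdm hm0]
  have htop : Subgroup.zpowers g = ⊤ := by
    apply Subgroup.eq_top_of_card_eq
    rw [Nat.card_zpowers, hg, Nat.card_eq_fintype_card, hcard]
  have hset : {u : Fˣ | u ^ 3 = 1} = (Subgroup.zpowers (g ^ (m / d)) : Set Fˣ) := by
    ext u
    simp only [Set.mem_setOf_eq, SetLike.mem_coe, Subgroup.mem_zpowers_iff]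
    constructor
    · intro hu
      replace hu : u ^ d = 1 := pow_gcd_eq_one.mpr ⟨hu, by rw [← hcard]; exact pow_card_eq_one⟩
      obtain ⟨k, hk⟩ := Subgroup.mem_zpowers_iff.mp
        (htop ▸ Subgroup.mem_top u : u ∈ Subgroup.zpowers g)
      have hgkd : g ^ (k * d) = 1 := by
        rw [zpow_mul]
        norm_cast
        rw [hk, hu]
      have hdvd : ((m : ℤ)) ∣ k * d := by
        rwa [← orderOf_dvd_iff_zpow_eq_one, hg] at hgkd
      have hmd : (m : ℤ) = (m / d : ℕ) * (d : ℕ) := by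
        norm_cast
        exact (Nat.div_mul_cancel hdm).symm
      rw [hmd] at hdvd
      have hdvd2 : ((m / d : ℕ) : ℤ) ∣ k :=
        (mul_dvd_mul_iff_right (by exact_mod_cast hd0 : ((d:ℕ) : ℤ) ≠ 0)).mp
          (by exact_mod_cast hdvd)
      obtain ⟨j, hj⟩ := hdvd2
      exact ⟨j, by rw [← hk, hj, ← zpow_natCast, ← zpow_mul]⟩
    · rintro ⟨k, rfl⟩
      have h3 : (g ^ (m/d)) ^ (3:ℕ) = 1 := by
        rw [← orderOf_dvd_iff_pow_eq_one, horder]; exact Nat.gcd_dvd_left 3 m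
      rw [← zpow_natCast ((g ^ (m/d)) ^ k) 3, ← zpow_mul, mul_comm, zpow_mul,
        zpow_natCast, h3, one_zpow]
  have he : Nat.card {u : Fˣ // u ^ 3 = 1} = Nat.card (Subgroup.zpowers (g ^ (m / d))) :=
    Nat.card_congr (Equiv.setCongr hset)
  rw [he, Nat.card_zpowers, horder]

/-- the cubic `X^3 + a X^2 + b X - 1` -/
noncomputable def cub (a b : F) : F[X] := X^3 + C a * X^2 + C b * X - 1

theorem cub_monic (a b : F) : (cub a b).Monic := by unfold cub; monicity!

theorem cub_natDegree (a b : F) : (cub a b).natDegree = 3 := by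
  unfold cub; compute_degree!

theorem cub_coeff0 (a b : F) : (cub a b).coeff 0 = -1 := by simp [cub, coeff_one]

theorem cub_coeff2 (a b : F) : (cub a b).coeff 2 = a := by simp [cub, coeff_one]

theorem cub_coeff1 (a b : F) : (cub a b).coeff 1 = b := by simp [cub, coeff_one]

theorem cub_eval (a b r : F) : (cub a b).eval r = r^3 + a*r^2 + b*r - 1 := by simp [cub]

theorem eq_cub (p : F[X]) (h1 : p.Monic) (h2 : p.natDegree = 3) (h3 : p.coeff 0 = -1) :
    p = cub (p.coeff 2) (p.coeff 1) := by
  have h := p.as_sum_range' 4 (by omega)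
  have hl : p.coeff 3 = 1 := by
    have := h1.leadingCoeff
    rwa [leadingCoeff, h2] at this
  conv_lhs => rw [h]
  simp only [Finset.sum_range_succ, ← C_mul_X_pow_eq_monomial, hl, h3, cub, map_one, map_neg]
  ring

/-- the root set of the cubic, as a subset of `F` -/
def rset (a b : F) : Finset F := univ.filter (fun r => r^3 + a*r^2 + b*r = 1)

theorem mem_rset {a b r : F} : r ∈ rset a b ↔ r^3 + a*r^2 + b*r = 1 := by
  simp [rset]

theorem rset_card_le (a b : F) : (rset a b).card ≤ 3 := by
  have hsub : rset a b ⊆ (cub a b).roots.toFinset := by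
    intro r hr
    rw [mem_rset] at hr
    rw [Multiset.mem_toFinset, mem_roots (cub_monic a b).ne_zero, IsRoot, cub_eval]
    rw [sub_eq_zero]; exact hr
  calc (rset a b).card ≤ (cub a b).roots.toFinset.card := card_le_card hsub
    _ ≤ Multiset.card (cub a b).roots := Multiset.toFinset_card_le _
    _ ≤ (cub a b).natDegree := (cub a b).card_roots'
    _ = 3 := cub_natDegree a b

theorem cub_irreducible_iff (a b : F) : Irreducible (cub a b) ↔ rset a b = ∅ := by
  rw [(cub_monic a b).irreducible_iff_roots_eq_zero_of_degree_le_three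
    (by rw [cub_natDegree]; omega) (by rw [cub_natDegree])]
  rw [Multiset.eq_zero_iff_forall_notMem, Finset.eq_empty_iff_forall_notMem]
  apply forall_congr'
  intro r
  rw [mem_roots (cub_monic a b).ne_zero, IsRoot, cub_eval, mem_rset, sub_eq_zero]

theorem cond_ne_zero {a b r : F} (h : r^3 + a*r^2 + b*r = 1) : r ≠ 0 := by
  rintro rfl
  simp at h

theorem pair_unique {r s a b : F} (hr : r ≠ 0) (hs : s ≠ 0) (hrs : r ≠ s)
    (h1 : r^3 + a*r^2 + b*r = 1) (h2 : s^3 + a*s^2 + b*s = 1) :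
    a = -(r + s + (r*s)⁻¹) ∧ b = r*s + r⁻¹ + s⁻¹ := by
  have hd : r - s ≠ 0 := sub_ne_zero.mpr hrs
  constructor
  · apply mul_right_cancel₀ (mul_ne_zero (mul_ne_zero hr hs) hd)
    have h3 : a * (r*s*(r-s)) = (s-r)*(1+r*s*(r+s)) := by linear_combination s*h1 - r*h2
    rw [h3]; field_simp; ring
  · apply mul_right_cancel₀ (mul_ne_zero (mul_ne_zero hr hs) hd)
    have h3 : b * (r*s*(r-s)) = (r-s)*(r+s+r^2*s^2) := by linear_combination r^2*h2 - s^2*h1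
    rw [h3]; field_simp; ring

theorem pair_sat1 {r s : F} (hr : r ≠ 0) (hs : s ≠ 0) :
    r^3 + (-(r + s + (r*s)⁻¹))*r^2 + (r*s + r⁻¹ + s⁻¹)*r = 1 := by
  field_simp; ring

theorem pair_sat2 {r s : F} (hr : r ≠ 0) (hs : s ≠ 0) :
    s^3 + (-(r + s + (r*s)⁻¹))*s^2 + (r*s + r⁻¹ + s⁻¹)*s = 1 := by
  field_simp; ring

theorem cub_factor {r s t : F} (hr : r ≠ 0) (hs : s ≠ 0) :
    t^3 + (-(r + s + (r*s)⁻¹))*t^2 + (r*s + r⁻¹ + s⁻¹)*t - 1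
      = (t - r) * (t - s) * (t - (r*s)⁻¹) := by
  field_simp; ring

theorem pair_fiber_eq {r s : F} (hr : r ≠ 0) (hs : s ≠ 0) (hrs : r ≠ s) :
    ((univ : Finset (F × F)).filter fun ab =>
        r^3 + ab.1*r^2 + ab.2*r = 1 ∧ s^3 + ab.1*s^2 + ab.2*s = 1)
      = {(-(r + s + (r*s)⁻¹), r*s + r⁻¹ + s⁻¹)} := by
  ext ⟨a, b⟩
  simp only [mem_filter, mem_univ, true_and, mem_singleton, Prod.mk.injEq]
  constructor
  · rintro ⟨h1, h2⟩
    exact pair_unique hr hs hrs h1 h2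
  · rintro ⟨rfl, rfl⟩
    exact ⟨pair_sat1 hr hs, pair_sat2 hr hs⟩


theorem line_fiber (r : F) :
    ((univ : Finset (F × F)).filter fun ab => r^3 + ab.1*r^2 + ab.2*r = 1).card
      = if r = 0 then 0 else Fintype.card F := by
  split_ifs with h
  · subst h
    rw [Finset.card_eq_zero, Finset.filter_eq_empty_iff]
    intro ab _
    simp
  · rw [← Finset.card_univ (α := F)]
    apply Finset.card_bij (fun ab _ => ab.1)
    · intros; exact mem_univ _
    · rintro ⟨a, b⟩ ha ⟨a', b'⟩ hb hab
      simp only [mem_filter] at ha hb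
      cases hab
      have hb' : b = b' := by
        have h1 := ha.2
        have h2 := hb.2
        have := sub_eq_zero.mpr (h1.trans h2.symm)
        have : (b - b') * r = 0 := by linear_combination h1 - h2
        rcases mul_eq_zero.mp this with h' | h'
        · exact sub_eq_zero.mp h'
        · exact absurd h' h
      rw [hb']
    · intro a _
      refine ⟨(a, (1 - r^3 - a*r^2) * r⁻¹), ?_, rfl⟩
      simp only [mem_filter, mem_univ, true_and]
      field_simp
      ring

theorem pair_fiber_card (r s : F) :
    ((univ : Finset (F × F)).filter fun ab =>
        r ≠ s ∧ r^3 + ab.1*r^2 + ab.2*r = 1 ∧ s^3 + ab.1*s^2 + ab.2*s = 1).card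
      = if r ≠ 0 ∧ s ≠ 0 ∧ r ≠ s then 1 else 0 := by
  split_ifs with h
  · obtain ⟨hr, hs, hrs⟩ := h
    have : ((univ : Finset (F × F)).filter fun ab =>
        r ≠ s ∧ r^3 + ab.1*r^2 + ab.2*r = 1 ∧ s^3 + ab.1*s^2 + ab.2*s = 1)
        = ((univ : Finset (F × F)).filter fun ab =>
          r^3 + ab.1*r^2 + ab.2*r = 1 ∧ s^3 + ab.1*s^2 + ab.2*s = 1) := by
      apply Finset.filter_congr
      intro ab _
      simp [hrs]
    rw [this, pair_fiber_eq hr hs hrs, card_singleton]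
  · rw [Finset.card_eq_zero, Finset.filter_eq_empty_iff]
    rintro ab _ ⟨hrs, h1, h2⟩
    exact h ⟨cond_ne_zero h1, cond_ne_zero h2, hrs⟩

theorem triple_fiber_card (r s t : F) :
    ((univ : Finset (F × F)).filter fun ab =>
        (r ≠ s ∧ r ≠ t ∧ s ≠ t) ∧ r^3 + ab.1*r^2 + ab.2*r = 1 ∧
          s^3 + ab.1*s^2 + ab.2*s = 1 ∧ t^3 + ab.1*t^2 + ab.2*t = 1).card
      = if (r ≠ s ∧ r ≠ t ∧ s ≠ t) ∧ r*s*t = 1 then 1 else 0 := by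
  split_ifs with h
  · obtain ⟨⟨hrs, hrt, hst⟩, hprod⟩ := h
    have hr : r ≠ 0 := fun h0 => by simp [h0] at hprod
    have hs : s ≠ 0 := fun h0 => by simp [h0] at hprod
    have ht : t = (r*s)⁻¹ := by
      field_simp
      linear_combination hprod
    rw [Finset.card_eq_one]
    refine ⟨(-(r + s + (r*s)⁻¹), r*s + r⁻¹ + s⁻¹), ?_⟩
    ext ⟨a, b⟩
    simp only [mem_filter, mem_univ, true_and, mem_singleton, Prod.mk.injEq]
    constructor
    · rintro ⟨_, h1, h2, _⟩
      exact pair_unique hr hs hrs h1 h2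
    · rintro ⟨rfl, rfl⟩
      refine ⟨⟨hrs, hrt, hst⟩, pair_sat1 hr hs, pair_sat2 hr hs, ?_⟩
      have := cub_factor (t := t) hr hs
      rw [ht] at this ⊢
      rw [← sub_eq_zero]
      rw [this]
      simp
  · rw [Finset.card_eq_zero, Finset.filter_eq_empty_iff]
    rintro ⟨a, b⟩ _ ⟨⟨hrs, hrt, hst⟩, h1, h2, h3⟩
    have hr := cond_ne_zero h1
    have hs := cond_ne_zero h2
    apply h
    refine ⟨⟨hrs, hrt, hst⟩, ?_⟩
    obtain ⟨rfl, rfl⟩ := pair_unique hr hs hrs h1 h2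
    have hfac := cub_factor (t := t) hr hs
    rw [← sub_eq_zero] at h3
    rw [hfac] at h3
    rcases mul_eq_zero.mp h3 with h' | h'
    · rcases mul_eq_zero.mp h' with h'' | h''
      · exact absurd (sub_eq_zero.mp h'') hrt.symm
      · exact absurd (sub_eq_zero.mp h'') hst.symm
    · have htv : t = (r*s)⁻¹ := sub_eq_zero.mp h'
      rw [htv]
      field_simp

theorem inv_eq_imp {F : Type*} [Field F] {x y : F} (hx : x ≠ 0) (h : x⁻¹ = y) : y * x = 1 := by
  rw [← h]; exact inv_mul_cancel₀ hx

theorem card_nonzero : (univ.filter fun x : F => x ≠ 0).card = Fintype.card F - 1 := by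
  rw [Finset.filter_ne', Finset.card_erase_of_mem (mem_univ 0), Finset.card_univ]

theorem card_NZ : ((univ : Finset (F × F)).filter fun rs => rs.1 ≠ 0 ∧ rs.2 ≠ 0).card
    = (Fintype.card F - 1) * (Fintype.card F - 1) := by
  have : ((univ : Finset (F × F)).filter fun rs => rs.1 ≠ 0 ∧ rs.2 ≠ 0)
      = (univ.filter fun x : F => x ≠ 0) ×ˢ (univ.filter fun x : F => x ≠ 0) := by
    ext ⟨r, s⟩
    simp [Finset.mem_product]
  rw [this, Finset.card_product, card_nonzero]

theorem card_D : ((univ : Finset (F × F)).filter fun rs => rs.1 = rs.2 ∧ rs.1^3 = 1).card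
    = Nat.gcd 3 (Fintype.card F - 1) := by
  rw [← card_cube_roots (F := F)]
  apply Finset.card_bij (fun rs _ => rs.1)
  · rintro ⟨r, s⟩ h
    simp only [mem_filter, mem_univ, true_and] at h ⊢
    exact h.2
  · rintro ⟨r, s⟩ h ⟨r', s'⟩ h' hh
    simp only [mem_filter] at h h'
    cases hh
    rw [← h.2.1, ← h'.2.1]
  · intro x hx
    simp only [mem_filter, mem_univ, true_and] at hx
    exact ⟨(x, x), by simp [hx], rfl⟩

theorem card_bad :
    ((univ : Finset (F × F)).filter fun rs => (rs.1 ≠ 0 ∧ rs.2 ≠ 0) ∧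
        (rs.1 = rs.2 ∨ (rs.1*rs.2)⁻¹ = rs.1 ∨ (rs.1*rs.2)⁻¹ = rs.2)).card
      + 2 * Nat.gcd 3 (Fintype.card F - 1) = 3 * (Fintype.card F - 1) := by
  classical
  set m := Fintype.card F - 1 with hmdef
  have hZ : (univ.filter fun x : F => x ≠ 0).card = m := card_nonzero
  set B1 := (univ : Finset (F × F)).filter fun rs =>
    (rs.1 ≠ 0 ∧ rs.2 ≠ 0) ∧ rs.1 = rs.2 with hB1
  set B2 := (univ : Finset (F × F)).filter fun rs =>
    (rs.1 ≠ 0 ∧ rs.2 ≠ 0) ∧ (rs.1*rs.2)⁻¹ = rs.1 with hB2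
  set B3 := (univ : Finset (F × F)).filter fun rs =>
    (rs.1 ≠ 0 ∧ rs.2 ≠ 0) ∧ (rs.1*rs.2)⁻¹ = rs.2 with hB3
  set D := (univ : Finset (F × F)).filter fun rs => rs.1 = rs.2 ∧ rs.1^3 = 1 with hD
  have hcb1 : B1.card = m := by
    rw [← hZ]
    apply Finset.card_bij (fun rs _ => rs.1)
    · rintro ⟨r, s⟩ h
      simp only [hB1, mem_filter, mem_univ, true_and] at h ⊢
      exact h.1.1
    · rintro ⟨r, s⟩ h ⟨r', s'⟩ h' hh
      simp only [hB1, mem_filter] at h h'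
      cases hh
      rw [← h.2.2, ← h'.2.2]
    · intro x hx
      simp only [mem_filter, mem_univ, true_and] at hx
      exact ⟨(x, x), by simp [hB1, hx], rfl⟩
  have hcb2 : B2.card = m := by
    rw [← hZ]
    apply Finset.card_bij (fun rs _ => rs.1)
    · rintro ⟨r, s⟩ h
      simp only [hB2, mem_filter, mem_univ, true_and] at h ⊢
      exact h.1.1
    · rintro ⟨r, s⟩ h ⟨r', s'⟩ h' hh
      simp only [hB2, mem_filter, mem_univ, true_and] at h h'
      cases hh
      have e1 : s = (r^2)⁻¹ := by
        obtain ⟨⟨hr, hs⟩, he⟩ := h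
        have hmul : r * (r * s) = 1 := inv_eq_imp (mul_ne_zero hr hs) he
        exact eq_inv_of_mul_eq_one_left (by linear_combination hmul)
      have e2 : s' = (r^2)⁻¹ := by
        obtain ⟨⟨hr, hs⟩, he⟩ := h'
        have hmul : r * (r * s') = 1 := inv_eq_imp (mul_ne_zero hr hs) he
        exact eq_inv_of_mul_eq_one_left (by linear_combination hmul)
      rw [e1, e2]
    · intro x hx
      simp only [mem_filter, mem_univ, true_and] at hx
      refine ⟨(x, (x^2)⁻¹), ?_, rfl⟩
      simp only [hB2, mem_filter, mem_univ, true_and]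
      refine ⟨⟨hx, inv_ne_zero (pow_ne_zero 2 hx)⟩, ?_⟩
      field_simp
  have hcb3 : B3.card = m := by
    rw [← hZ]
    apply Finset.card_bij (fun rs _ => rs.2)
    · rintro ⟨r, s⟩ h
      simp only [hB3, mem_filter, mem_univ, true_and] at h ⊢
      exact h.1.2
    · rintro ⟨r, s⟩ h ⟨r', s'⟩ h' hh
      simp only [hB3, mem_filter, mem_univ, true_and] at h h'
      cases hh
      have e1 : r = (s^2)⁻¹ := by
        obtain ⟨⟨hr, hs⟩, he⟩ := h
        have hmul : s * (r * s) = 1 := inv_eq_imp (mul_ne_zero hr hs) he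
        exact eq_inv_of_mul_eq_one_left (by linear_combination hmul)
      have e2 : r' = (s^2)⁻¹ := by
        obtain ⟨⟨hr, hs⟩, he⟩ := h'
        have hmul : s * (r' * s) = 1 := inv_eq_imp (mul_ne_zero hr hs) he
        exact eq_inv_of_mul_eq_one_left (by linear_combination hmul)
      rw [e1, e2]
    · intro x hx
      simp only [mem_filter, mem_univ, true_and] at hx
      refine ⟨((x^2)⁻¹, x), ?_, rfl⟩
      simp only [hB3, mem_filter, mem_univ, true_and]
      refine ⟨⟨inv_ne_zero (pow_ne_zero 2 hx), hx⟩, ?_⟩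
      field_simp
  have hI12 : B1 ∩ B2 = D := by
    ext ⟨r, s⟩
    simp only [hB1, hB2, hD, Finset.mem_inter, mem_filter, mem_univ, true_and]
    constructor
    · rintro ⟨⟨⟨hr, hs⟩, rfl⟩, _, he⟩
      refine ⟨rfl, ?_⟩
      have hmul : r * (r * r) = 1 := inv_eq_imp (mul_ne_zero hr hr) he
      linear_combination hmul
    · rintro ⟨rfl, hcube⟩
      have hr : r ≠ 0 := fun h0 => by simp [h0] at hcube
      exact ⟨⟨⟨hr, hr⟩, rfl⟩, ⟨hr, hr⟩,
        inv_eq_of_mul_eq_one_right (by linear_combination hcube)⟩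
  have hI3 : (B1 ∪ B2) ∩ B3 = D := by
    ext ⟨r, s⟩
    simp only [hB1, hB2, hB3, hD, Finset.mem_inter, Finset.mem_union, mem_filter,
      mem_univ, true_and]
    constructor
    · rintro ⟨h12, ⟨hr, hs⟩, he3⟩
      rcases h12 with ⟨_, rfl⟩ | ⟨_, he2⟩
      · refine ⟨rfl, ?_⟩
        have hmul : r * (r * r) = 1 := inv_eq_imp (mul_ne_zero hr hr) he3
        linear_combination hmul
      · have hrs : r = s := he2.symm.trans he3
        subst hrs
        refine ⟨rfl, ?_⟩
        have hmul : r * (r * r) = 1 := inv_eq_imp (mul_ne_zero hr hr) he3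
        linear_combination hmul
    · rintro ⟨rfl, hcube⟩
      have hr : r ≠ 0 := fun h0 => by simp [h0] at hcube
      exact ⟨Or.inl ⟨⟨hr, hr⟩, rfl⟩, ⟨hr, hr⟩,
        inv_eq_of_mul_eq_one_right (by linear_combination hcube)⟩
  have h12 : (B1 ∪ B2).card + D.card = B1.card + B2.card := by
    rw [← hI12]; exact card_union_add_card_inter B1 B2
  have h123 : ((B1 ∪ B2) ∪ B3).card + D.card = (B1 ∪ B2).card + B3.card := by
    rw [← hI3]; exact card_union_add_card_inter _ _
  have hBadeq : ((univ : Finset (F × F)).filter fun rs => (rs.1 ≠ 0 ∧ rs.2 ≠ 0) ∧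
      (rs.1 = rs.2 ∨ (rs.1*rs.2)⁻¹ = rs.1 ∨ (rs.1*rs.2)⁻¹ = rs.2)) = (B1 ∪ B2) ∪ B3 := by
    ext ⟨r, s⟩
    simp only [hB1, hB2, hB3, Finset.mem_union, mem_filter, mem_univ, true_and]
    tauto
  have hcD : D.card = Nat.gcd 3 m := card_D
  rw [hBadeq]
  omega

theorem card_GT :
    ((univ : Finset (F × F × F)).filter fun x =>
        (x.1 ≠ x.2.1 ∧ x.1 ≠ x.2.2 ∧ x.2.1 ≠ x.2.2) ∧ x.1 * x.2.1 * x.2.2 = 1).card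
      + ((univ : Finset (F × F)).filter fun rs => (rs.1 ≠ 0 ∧ rs.2 ≠ 0) ∧
          (rs.1 = rs.2 ∨ (rs.1*rs.2)⁻¹ = rs.1 ∨ (rs.1*rs.2)⁻¹ = rs.2)).card
      = (Fintype.card F - 1) * (Fintype.card F - 1) := by
  classical
  have hsplit :
      (((univ : Finset (F × F)).filter fun rs => rs.1 ≠ 0 ∧ rs.2 ≠ 0).filter fun rs =>
          ¬(rs.1 = rs.2 ∨ (rs.1*rs.2)⁻¹ = rs.1 ∨ (rs.1*rs.2)⁻¹ = rs.2)).card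
        + (((univ : Finset (F × F)).filter fun rs => rs.1 ≠ 0 ∧ rs.2 ≠ 0).filter fun rs =>
          (rs.1 = rs.2 ∨ (rs.1*rs.2)⁻¹ = rs.1 ∨ (rs.1*rs.2)⁻¹ = rs.2)).card
        = ((univ : Finset (F × F)).filter fun rs => rs.1 ≠ 0 ∧ rs.2 ≠ 0).card := by
    rw [add_comm]
    exact Finset.card_filter_add_card_filter_not _
  have he1 : (((univ : Finset (F × F)).filter fun rs => rs.1 ≠ 0 ∧ rs.2 ≠ 0).filter fun rs =>
      (rs.1 = rs.2 ∨ (rs.1*rs.2)⁻¹ = rs.1 ∨ (rs.1*rs.2)⁻¹ = rs.2))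
      = ((univ : Finset (F × F)).filter fun rs => (rs.1 ≠ 0 ∧ rs.2 ≠ 0) ∧
          (rs.1 = rs.2 ∨ (rs.1*rs.2)⁻¹ = rs.1 ∨ (rs.1*rs.2)⁻¹ = rs.2)) := by
    rw [Finset.filter_filter]
  have he2 : ((univ : Finset (F × F × F)).filter fun x =>
      (x.1 ≠ x.2.1 ∧ x.1 ≠ x.2.2 ∧ x.2.1 ≠ x.2.2) ∧ x.1 * x.2.1 * x.2.2 = 1).card
      = (((univ : Finset (F × F)).filter fun rs => rs.1 ≠ 0 ∧ rs.2 ≠ 0).filter fun rs =>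
          ¬(rs.1 = rs.2 ∨ (rs.1*rs.2)⁻¹ = rs.1 ∨ (rs.1*rs.2)⁻¹ = rs.2)).card := by
    apply Finset.card_bij (fun x _ => (x.1, x.2.1))
    · rintro ⟨r, s, t⟩ hx
      simp only [mem_filter, mem_univ, true_and] at hx ⊢
      obtain ⟨⟨hrs, hrt, hst⟩, hprod⟩ := hx
      have hr : r ≠ 0 := fun h0 => by simp [h0] at hprod
      have hs : s ≠ 0 := fun h0 => by simp [h0] at hprod
      have ht : t = (r*s)⁻¹ := by field_simp; linear_combination hprod
      refine ⟨⟨hr, hs⟩, ?_⟩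
      push_neg
      exact ⟨hrs, fun h => hrt (h.symm.trans ht.symm),
        fun h => hst (h.symm.trans ht.symm)⟩
    · rintro ⟨r, s, t⟩ hx ⟨r', s', t'⟩ hy hh
      simp only [mem_filter, mem_univ, true_and] at hx hy
      simp only [Prod.mk.injEq] at hh
      obtain ⟨rfl, rfl⟩ := hh
      obtain ⟨⟨_, _, _⟩, hprod⟩ := hx
      obtain ⟨⟨_, _, _⟩, hprod'⟩ := hy
      have hr : r ≠ 0 := fun h0 => by simp [h0] at hprod
      have hs : s ≠ 0 := fun h0 => by simp [h0] at hprod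
      have ht : t = (r*s)⁻¹ := by field_simp; linear_combination hprod
      have ht' : t' = (r*s)⁻¹ := by field_simp; linear_combination hprod'
      rw [ht, ht']
    · rintro ⟨r, s⟩ hrs
      simp only [mem_filter, mem_univ, true_and] at hrs
      obtain ⟨⟨hr, hs⟩, hbad⟩ := hrs
      push_neg at hbad
      obtain ⟨hne, hb2, hb3⟩ := hbad
      refine ⟨(r, s, (r*s)⁻¹), ?_, rfl⟩
      simp only [mem_filter, mem_univ, true_and]
      exact ⟨⟨hne, fun h => hb2 h.symm, fun h => hb3 h.symm⟩,
        mul_inv_cancel₀ (mul_ne_zero hr hs)⟩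
  rw [he2, ← he1, ← card_NZ (F := F)]
  exact hsplit

end Aux


open Polynomial Finset in
theorem count_irreducible_cubics (F : Type*) [Field F] [Fintype F] :
    Nat.card {p : Polynomial F // p.Monic ∧ p.natDegree = 3 ∧ p.coeff 0 = -1 ∧
        Irreducible p} =
      (Fintype.card F ^ 2 + Fintype.card F + 1 - Nat.gcd 3 (Fintype.card F - 1)) / 3 := by
  classical
  letI : DecidableEq F := Classical.decEq F
  -- step 1: reduce to counting pairs of coefficients
  have hequiv : {p : Polynomial F // p.Monic ∧ p.natDegree = 3 ∧ p.coeff 0 = -1 ∧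
      Irreducible p} ≃ {ab : F × F // Irreducible (cub ab.1 ab.2)} :=
    { toFun := fun p => ⟨(p.1.coeff 2, p.1.coeff 1),
        (eq_cub p.1 p.2.1 p.2.2.1 p.2.2.2.1) ▸ p.2.2.2.2⟩
      invFun := fun ab => ⟨cub ab.1.1 ab.1.2,
        cub_monic _ _, cub_natDegree _ _, cub_coeff0 _ _, ab.2⟩
      left_inv := fun p => Subtype.ext (eq_cub p.1 p.2.1 p.2.2.1 p.2.2.2.1).symm
      right_inv := fun ab => Subtype.ext (by
        obtain ⟨⟨a, b⟩, h⟩ := ab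
        simp [cub_coeff2, cub_coeff1]) }
  rw [Nat.card_congr hequiv, Nat.card_eq_fintype_card, Fintype.card_subtype]
  have hfc : ((univ : Finset (F × F)).filter fun ab => Irreducible (cub ab.1 ab.2))
      = (univ : Finset (F × F)).filter fun ab => rset ab.1 ab.2 = ∅ :=
    Finset.filter_congr fun ab _ => by
      simp only [cub_irreducible_iff]
  rw [hfc]
  -- notation
  set q := Fintype.card F with hqdef
  set m := q - 1 with hmdef
  set d := Nat.gcd 3 m with hddef
  set N := ((univ : Finset (F × F)).filter fun ab => rset ab.1 ab.2 = ∅).card with hNdef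
  have hq2 : 2 ≤ q := Fintype.one_lt_card
  -- Sum identity 1
  have S1 : ∑ ab : F × F, (rset ab.1 ab.2).card = m * q := by
    have h := sum_card_swap (fun (ab : F × F) (r : F) =>
      r^3 + ab.1*r^2 + ab.2*r = 1)
    rw [show (∑ ab : F × F, (rset ab.1 ab.2).card)
        = ∑ ab : F × F, ((univ : Finset F).filter
          (fun r => r^3 + ab.1*r^2 + ab.2*r = 1)).card from rfl, h]
    rw [Finset.sum_congr rfl (fun r _ => line_fiber r)]
    rw [Finset.sum_ite, Finset.sum_const, Finset.sum_const]
    rw [Finset.filter_eq', if_pos (mem_univ (0:F))]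
    have : ((univ : Finset F).filter fun r => ¬ r = 0).card = m := card_nonzero
    rw [this]
    simp [hqdef]
  -- Sum identity 2
  have S2 : ∑ ab : F × F, (rset ab.1 ab.2).offDiag.card = m * m - m := by
    have h := sum_card_swap (fun (ab : F × F) (rs : F × F) =>
      rs.1 ≠ rs.2 ∧ rs.1^3 + ab.1*rs.1^2 + ab.2*rs.1 = 1 ∧
        rs.2^3 + ab.1*rs.2^2 + ab.2*rs.2 = 1)
    have hL : ∀ ab : F × F, ((univ : Finset (F × F)).filter
        (fun rs => rs.1 ≠ rs.2 ∧ rs.1^3 + ab.1*rs.1^2 + ab.2*rs.1 = 1 ∧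
          rs.2^3 + ab.1*rs.2^2 + ab.2*rs.2 = 1)) = (rset ab.1 ab.2).offDiag := by
      intro ab
      ext ⟨r, s⟩
      simp only [mem_filter, mem_univ, true_and, Finset.mem_offDiag, mem_rset]
      tauto
    rw [← Finset.sum_congr rfl (fun ab _ => congrArg Finset.card (hL ab)), h]
    rw [Finset.sum_congr rfl (fun rs _ => pair_fiber_card rs.1 rs.2)]
    rw [← Finset.card_filter]
    have hZ : ((univ : Finset (F × F)).filter fun rs =>
        rs.1 ≠ 0 ∧ rs.2 ≠ 0 ∧ rs.1 ≠ rs.2)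
        = ((univ : Finset F).filter fun x => x ≠ 0).offDiag := by
      ext ⟨r, s⟩
      simp only [mem_filter, mem_univ, true_and, Finset.mem_offDiag]
    rw [hZ, Finset.offDiag_card, card_nonzero]
  -- Sum identity 3
  have S3 : ∑ ab : F × F,
      (rset ab.1 ab.2).card * ((rset ab.1 ab.2).card - 1) * ((rset ab.1 ab.2).card - 2)
      + ((univ : Finset (F × F)).filter fun rs => (rs.1 ≠ 0 ∧ rs.2 ≠ 0) ∧
          (rs.1 = rs.2 ∨ (rs.1*rs.2)⁻¹ = rs.1 ∨ (rs.1*rs.2)⁻¹ = rs.2)).card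
      = m * m := by
    have h := sum_card_swap (fun (ab : F × F) (x : F × F × F) =>
      (x.1 ≠ x.2.1 ∧ x.1 ≠ x.2.2 ∧ x.2.1 ≠ x.2.2) ∧
        x.1^3 + ab.1*x.1^2 + ab.2*x.1 = 1 ∧ x.2.1^3 + ab.1*x.2.1^2 + ab.2*x.2.1 = 1 ∧
        x.2.2^3 + ab.1*x.2.2^2 + ab.2*x.2.2 = 1)
    have hL : ∀ ab : F × F, ((univ : Finset (F × F × F)).filter
        (fun x => (x.1 ≠ x.2.1 ∧ x.1 ≠ x.2.2 ∧ x.2.1 ≠ x.2.2) ∧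
          x.1^3 + ab.1*x.1^2 + ab.2*x.1 = 1 ∧ x.2.1^3 + ab.1*x.2.1^2 + ab.2*x.2.1 = 1 ∧
          x.2.2^3 + ab.1*x.2.2^2 + ab.2*x.2.2 = 1))
        = ((univ : Finset (F × F × F)).filter fun x =>
          (x.1 ≠ x.2.1 ∧ x.1 ≠ x.2.2 ∧ x.2.1 ≠ x.2.2) ∧
          x.1 ∈ rset ab.1 ab.2 ∧ x.2.1 ∈ rset ab.1 ab.2 ∧ x.2.2 ∈ rset ab.1 ab.2) := by
      intro ab
      ext ⟨r, s, t⟩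
      simp only [mem_filter, mem_univ, true_and, mem_rset]
    have hLHS : ∑ ab : F × F,
        (rset ab.1 ab.2).card * ((rset ab.1 ab.2).card - 1) * ((rset ab.1 ab.2).card - 2)
        = ∑ x : F × F × F, ((univ : Finset (F × F)).filter (fun ab =>
          (x.1 ≠ x.2.1 ∧ x.1 ≠ x.2.2 ∧ x.2.1 ≠ x.2.2) ∧
          x.1^3 + ab.1*x.1^2 + ab.2*x.1 = 1 ∧ x.2.1^3 + ab.1*x.2.1^2 + ab.2*x.2.1 = 1 ∧
          x.2.2^3 + ab.1*x.2.2^2 + ab.2*x.2.2 = 1)).card := by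
      rw [← h]
      apply Finset.sum_congr rfl
      intro ab _
      rw [hL ab, card_distinct_triples' (rset ab.1 ab.2)]
    rw [hLHS]
    rw [Finset.sum_congr rfl (fun x _ => triple_fiber_card x.1 x.2.1 x.2.2)]
    rw [← Finset.card_filter]
    exact card_GT
  -- per-ab identity
  have key : ∀ ab : F × F,
      6 + 3 * (rset ab.1 ab.2).offDiag.card
        = 6 * (if rset ab.1 ab.2 = ∅ then 1 else 0) + 6 * (rset ab.1 ab.2).card
          + (rset ab.1 ab.2).card * ((rset ab.1 ab.2).card - 1)
            * ((rset ab.1 ab.2).card - 2) := by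
    intro ab
    rw [Finset.offDiag_card]
    rw [show (if rset ab.1 ab.2 = ∅ then (1:ℕ) else 0)
        = (if (rset ab.1 ab.2).card = 0 then 1 else 0) by
      simp [Finset.card_eq_zero]]
    exact nat_arith _ (rset_card_le ab.1 ab.2)
  have keysum : ∑ ab : F × F, (6 + 3 * (rset ab.1 ab.2).offDiag.card)
      = ∑ ab : F × F, (6 * (if rset ab.1 ab.2 = ∅ then 1 else 0)
        + 6 * (rset ab.1 ab.2).card
        + (rset ab.1 ab.2).card * ((rset ab.1 ab.2).card - 1)
          * ((rset ab.1 ab.2).card - 2)) :=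
    Finset.sum_congr rfl (fun ab _ => key ab)
  rw [Finset.sum_add_distrib] at keysum
  rw [Finset.sum_add_distrib, Finset.sum_add_distrib] at keysum
  rw [← Finset.mul_sum, ← Finset.mul_sum, ← Finset.mul_sum] at keysum
  have hNsum : ∑ ab : F × F, (if rset ab.1 ab.2 = ∅ then (1:ℕ) else 0) = N := by
    rw [hNdef, Finset.card_filter]
  have hconst : ∑ _ab : F × F, (6:ℕ) = (q * q) * 6 := by
    rw [Finset.sum_const, Finset.card_univ, Fintype.card_prod, smul_eq_mul, ← hqdef]
  rw [hconst, hNsum, S1, S2] at keysum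
  -- final arithmetic
  set g := ∑ ab : F × F,
      (rset ab.1 ab.2).card * ((rset ab.1 ab.2).card - 1) * ((rset ab.1 ab.2).card - 2)
    with hgdef
  set bad := ((univ : Finset (F × F)).filter fun rs => (rs.1 ≠ 0 ∧ rs.2 ≠ 0) ∧
      (rs.1 = rs.2 ∨ (rs.1*rs.2)⁻¹ = rs.1 ∨ (rs.1*rs.2)⁻¹ = rs.2)).card with hbaddef
  have hbad : bad + 2 * d = 3 * m := card_bad
  have hfin : 3 * N + d = q ^ 2 + q + 1 := by
    have hm1 : 1 ≤ m := by omega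
    have hqm : q = m + 1 := by omega
    zify [show m ≤ m * m from Nat.le_mul_of_pos_left m (by omega)] at keysum S3 hbad
    have hqq : (q:ℤ) * q = (m:ℤ) * m + 2 * m + 1 := by
      have : (q:ℤ) = (m:ℤ) + 1 := by exact_mod_cast hqm
      rw [this]; ring
    have hmq : (m:ℤ) * q = (m:ℤ) * m + m := by
      have : (q:ℤ) = (m:ℤ) + 1 := by exact_mod_cast hqm
      rw [this]; ring
    have hsq : (q:ℤ) ^ 2 = (q:ℤ) * q := sq (q:ℤ)
    zify
    rw [hsq]
    linarith [keysum, S3, hbad, hqq, hmq]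
  obtain ⟨X, hX⟩ : ∃ X, q ^ 2 + q + 1 = X := ⟨_, rfl⟩
  rw [hX] at hfin ⊢
  omega
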